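/- Abstract version of the Dobra–Fienberg bound: if f is a supermodular function on a distributive lattice and C₁,…,C_d are lattice elements with S_j = (C₁ ∨ ⋯ ∨ C_{j−1}) ∧ C_j for j = 2,…,d, then f(C₁ ∨ ⋯ ∨ C_d) ≥ Σ_{i=1}^d f(C_i) − Σ_{j=2}^d f(S_j). -/

import Mathlib

/-- Abstract Dobra–Fienberg bound: for a supermodular `f` on a distributive lattice and
elements `C 0, …, C (d-1)`, with `S j = (C 0 ∨ ⋯ ∨ C (j-1)) ∧ C j`,
`f(C 0 ∨ ⋯ ∨ C (d-1)) ≥ Σ_i f(C i) − Σ_{j=1}^{d-1} f(S j)`. -/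
theorem abstract_dobra_fienberg {𝕃 : Type*} [DistribLattice 𝕃] (f : 𝕃 → ℝ)
    (hf : ∀ a b : 𝕃, f a + f b ≤ f (a ⊔ b) + f (a ⊓ b))
    (d : ℕ) (hd : 1 ≤ d) (C : ℕ → 𝕃) :
    (∑ i ∈ Finset.range d, f (C i))
      - ∑ j ∈ Finset.range (d - 1),
          f (((Finset.range (j + 1)).sup' Finset.nonempty_range_add_one C) ⊓ C (j + 1))
      ≤ f ((Finset.range d).sup' (Finset.nonempty_range_iff.mpr (by omega)) C) := by
  induction d with
  | zero => omega
  | succ n ih =>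
    rcases Nat.eq_or_lt_of_le hd with h1 | h1
    · simp [← h1]
    · obtain ⟨m, rfl⟩ : ∃ m, n = m + 1 := ⟨n - 1, by omega⟩
      have ihn := ih (by omega)
      have key := hf ((Finset.range (m+1)).sup' Finset.nonempty_range_add_one C) (C (m+1))
      have hsup : (Finset.range (m+2)).sup' Finset.nonempty_range_add_one C
          = ((Finset.range (m+1)).sup' Finset.nonempty_range_add_one C) ⊔ C (m+1) := by
        have : Finset.range (m+2) = insert (m+1) (Finset.range (m+1)) :=
          Finset.range_add_one
        rw [Finset.sup'_congr Finset.nonempty_range_add_one this (fun _ _ => rfl),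
          Finset.sup'_insert, sup_comm]
      have heq : ∀ k (h : k ≠ 0), (Finset.range k).sup'
            (Finset.nonempty_range_iff.mpr h) C
          = (Finset.range k).sup' (Finset.nonempty_range_iff.mpr h) C := fun _ _ => rfl
      show (∑ i ∈ Finset.range (m+2), f (C i))
          - ∑ j ∈ Finset.range (m+1),
              f (((Finset.range (j + 1)).sup' Finset.nonempty_range_add_one C) ⊓ C (j + 1))
          ≤ f ((Finset.range (m+2)).sup' Finset.nonempty_range_add_one C)
      rw [Finset.sum_range_succ, Finset.sum_range_succ (fun j =>
        f (((Finset.range (j + 1)).sup' Finset.nonempty_range_add_one C) ⊓ C (j + 1))), hsup]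
      have ihn' : (∑ i ∈ Finset.range (m+1), f (C i))
          - ∑ j ∈ Finset.range m,
              f (((Finset.range (j + 1)).sup' Finset.nonempty_range_add_one C) ⊓ C (j + 1))
          ≤ f ((Finset.range (m+1)).sup' Finset.nonempty_range_add_one C) := ihn
      linarith
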